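/- Let n ≥ 1 and let K be a group containing a subgroup of finite index that is isomorphic to ℤⁿ, the free abelian group of rank n. Then K contains a characteristic subgroup (one mapped onto itself by every automorphism of K) that is isomorphic to ℤⁿ. -/

import Mathlib

/-- A subgroup of `Multiplicative M` is multiplicatively isomorphic to the `Multiplicative` of
the corresponding additive subgroup of `M`. -/
def subgroupMulEquivMultiplicative {M : Type*} [AddGroup M]
    (S : Subgroup (Multiplicative M)) :
    S ≃* Multiplicative (Subgroup.toAddSubgroup' S) where
  toFun x := Multiplicative.ofAdd ⟨Multiplicative.toAdd x.1, x.2⟩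
  invFun y := ⟨Multiplicative.ofAdd (Multiplicative.toAdd y).1, (Multiplicative.toAdd y).2⟩
  left_inv _ := rfl
  right_inv _ := rfl
  map_mul' _ _ := rfl

/-- An additive subgroup is additively isomorphic to its associated `ℤ`-submodule. -/
def addSubgroupAddEquivToIntSubmodule {M : Type*} [AddCommGroup M] (A : AddSubgroup M) :
    A ≃+ AddSubgroup.toIntSubmodule A where
  toFun x := ⟨x.1, x.2⟩
  invFun y := ⟨y.1, y.2⟩
  left_inv _ := rfl
  right_inv _ := rfl
  map_add' _ _ := rfl

/-- If a group `K` has a finite-index subgroup isomorphic to `ℤⁿ` (with `n ≥ 1`), then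
`K` has a characteristic subgroup isomorphic to `ℤⁿ`. -/
theorem exists_characteristic_free_abelian_of_finiteIndex_free_abelian
    {K : Type*} [Group K] (n : ℕ) (hn : 1 ≤ n)
    (H : Subgroup K) (hH : H.FiniteIndex)
    (hiso : Nonempty (H ≃* Multiplicative (Fin n → ℤ))) :
    ∃ C : Subgroup K, C.Characteristic ∧
      Nonempty (C ≃* Multiplicative (Fin n → ℤ)) := by
  obtain ⟨e⟩ := hiso
  haveI := hH
  set N : Subgroup K := H.normalCore with hNdef
  haveI : N.Normal := H.normalCore_normal
  haveI hNfi : N.FiniteIndex := H.finiteIndex_normalCore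
  set m : ℕ := N.index with hmdef
  have hm0 : m ≠ 0 := hNfi.index_ne_zero
  set Spow : Set K := {x | ∃ y : K, y ^ m = x} with hSdef
  set C : Subgroup K := Subgroup.closure Spow with hCdef
  have hCN : C ≤ N := (Subgroup.closure_le N).mpr (by
    rintro x ⟨y, rfl⟩
    exact N.pow_index_mem y)
  have hCH : C ≤ H := hCN.trans H.normalCore_le
  -- C is characteristic
  have hchar : C.Characteristic := by
    rw [Subgroup.characteristic_iff_map_eq]
    intro φ
    rw [hCdef, MonoidHom.map_closure]
    congr 1
    ext x
    constructor
    · rintro ⟨_, ⟨y, rfl⟩, rfl⟩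
      exact ⟨φ y, (map_pow φ.toMonoidHom y m).symm⟩
    · rintro ⟨y, rfl⟩
      exact ⟨φ.symm y ^ m, ⟨φ.symm y, rfl⟩, by rw [map_pow]; simp⟩
  -- C has finite index
  have hm0' : (m : ℤ) ≠ 0 := Int.natCast_ne_zero.mpr hm0
  set f : (Fin n → ℤ) →ₗ[ℤ] (Fin n → ℤ) := (m : ℤ) • LinearMap.id with hfdef
  have hfinj : Function.Injective f := by
    intro x y hxy
    exact smul_right_injective _ hm0' (by simpa [hfdef] using hxy)
  set N₀ : Submodule ℤ (Fin n → ℤ) := LinearMap.range f with hN₀def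
  have hN₀ : N₀.toAddSubgroup.index ≠ 0 := by
    rw [Int.submodule_toAddSubgroup_index_ne_zero_iff]
    exact ⟨(LinearEquiv.ofInjective f hfinj).symm⟩
  set B : Subgroup (Multiplicative (Fin n → ℤ)) := AddSubgroup.toSubgroup N₀.toAddSubgroup
    with hBdef
  set P : Subgroup H := B.comap e.toMonoidHom with hPdef
  have hPB : P.index = B.index := B.index_comap_of_surjective e.surjective
  set D : Subgroup K := P.map H.subtype with hDdef
  have hD : D.index ≠ 0 := by
    rw [hDdef, Subgroup.index_map_subtype, hPB]
    exact Nat.mul_ne_zero (by rw [hBdef, AddSubgroup.index_toSubgroup]; exact hN₀) hH.index_ne_zero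
  have hDC : D ≤ C := by
    rintro x ⟨h, hh, rfl⟩
    have hh' : Multiplicative.toAdd (e h) ∈ N₀ := hh
    obtain ⟨v, hv⟩ := hh'
    have hfv : f v = (m : ℤ) • v := by simp [hfdef]
    have hev : e h = Multiplicative.ofAdd ((m : ℤ) • v) := by
      rw [← hfv, hv]; rfl
    have hvm : Multiplicative.ofAdd ((m : ℤ) • v) = (Multiplicative.ofAdd v) ^ m := by
      rw [natCast_zsmul, ofAdd_nsmul]
    have hpow : h = e.symm (Multiplicative.ofAdd v) ^ m := by
      have : h = e.symm ((Multiplicative.ofAdd v) ^ m) := by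
        rw [← hvm, ← hev, MulEquiv.symm_apply_apply]
      rw [this, map_pow]
    have hx : H.subtype h = ((e.symm (Multiplicative.ofAdd v) : H) : K) ^ m := by
      rw [hpow]; rfl
    rw [hx]
    exact Subgroup.subset_closure ⟨_, rfl⟩
  have hCfi : C.index ≠ 0 := by
    intro h0
    exact hD (zero_dvd_iff.mp (h0 ▸ Subgroup.index_dvd_of_le hDC))
  -- C is isomorphic to ℤⁿ
  have hrel : C.relIndex H ≠ 0 := fun h =>
    hCfi (by rw [← Subgroup.relIndex_mul_index hCH, h, zero_mul])
  set S : Subgroup (Multiplicative (Fin n → ℤ)) := (C.subgroupOf H).map e.toMonoidHom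
    with hSdef'
  have hSidx : S.index ≠ 0 := by
    rw [hSdef', Subgroup.index_map_of_injective _ e.injective,
      MonoidHom.range_eq_top.mpr e.surjective, Subgroup.index_top, mul_one]
    exact hrel
  set A' : AddSubgroup (Fin n → ℤ) := Subgroup.toAddSubgroup' S with hA'def
  set Nsub : Submodule ℤ (Fin n → ℤ) := AddSubgroup.toIntSubmodule A' with hNsubdef
  have hNsub : Nsub.toAddSubgroup.index ≠ 0 := by
    rw [hNsubdef, AddSubgroup.toIntSubmodule_toAddSubgroup]
    exact hSidx
  obtain ⟨ℓ⟩ := Int.submodule_toAddSubgroup_index_ne_zero_iff.mp hNsub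
  refine ⟨C, hchar, ⟨?_⟩⟩
  exact ((Subgroup.subgroupOfEquivOfLe hCH).symm.trans
    ((MulEquiv.subgroupMap e (C.subgroupOf H)).trans
      ((subgroupMulEquivMultiplicative S).trans
        (AddEquiv.toMultiplicative
          ((addSubgroupAddEquivToIntSubmodule A').trans ℓ.toAddEquiv)))))
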